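/- In T(ℝ^d) with d ≥ 1, the smallest subspace I of T^{≥1}(ℝ^d) that contains the letter 1 and satisfies x≻y ∈ I and y≻x ∈ I for all x ∈ I and y ∈ T^{≥1}(ℝ^d) (the ≻-ideal generated by the letter 1) equals the linear span of all words containing the letter 1. -/

import Mathlib

open scoped BigOperators TensorProduct

namespace PathVarieties

/-- Words over an alphabet `α`; the letters `{1,…,d}` of `ℝ^d` correspond to `α = Fin d`. -/
abbrev Word (α : Type*) := List α

/-- The tensor algebra `T(ℝ^d)`, identified with the free real vector space on words. -/
abbrev TA (α : Type*) := Word α →₀ ℝ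

/-- The list of all (riffle) shuffles of two words. -/
def shuffles {α : Type*} : Word α → Word α → List (Word α)
  | [], v => [v]
  | a :: u, [] => [a :: u]
  | a :: u, b :: v =>
      ((shuffles u (b :: v)).map (a :: ·)) ++ ((shuffles (a :: u) v).map (b :: ·))
termination_by u v => u.length + v.length
decreasing_by all_goals (simp only [List.length_cons]; omega)

/-- Shuffle product of two words, as an element of `T(ℝ^d)`. -/
noncomputable def shw {α : Type*} (u v : Word α) : TA α :=
  ((shuffles u v).map fun w => Finsupp.single w (1 : ℝ)).sum

/-- The shuffle product `⧢` on `T(ℝ^d)`, the bilinear extension of the shuffle of words. -/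
noncomputable def sh {α : Type*} (x y : TA α) : TA α :=
  x.sum fun u cu => y.sum fun v cv => (cu * cv) • shw u v

/-- Right halfshuffle `u ≻ v` of words (`v` nonempty): shuffle `u` with `v` minus its
last letter, then append the last letter of `v`.  (This is the unique bilinear operation
with `w ≻ a = wa` and `w ≻ (va) = (w≻v + v≻w)a`.) -/
noncomputable def rshw {α : Type*} (u v : Word α) : TA α :=
  ((shuffles u v.dropLast).map fun w =>
    Finsupp.single (w ++ v.drop (v.length - 1)) (1 : ℝ)).sum

/-- Right halfshuffle `≻` on `T^{≥1}(ℝ^d)`, extended bilinearly. -/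
noncomputable def rsh {α : Type*} (x y : TA α) : TA α :=
  x.sum fun u cu => y.sum fun v cv => (cu * cv) • rshw u v

/-- Left halfshuffle `u ≺ v` of words (`u` nonempty): the first letter of `u` followed by
the shuffle of the rest of `u` with `v`.  (This is the unique bilinear operation with
`a ≺ w = aw` and `(av) ≺ w = a(w≺v + v≺w)`.) -/
noncomputable def lshw {α : Type*} (u v : Word α) : TA α :=
  ((shuffles u.tail v).map fun w => Finsupp.single (u.take 1 ++ w) (1 : ℝ)).sum

/-- Left halfshuffle `≺` on `T^{≥1}(ℝ^d)`, extended bilinearly. -/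
noncomputable def lsh {α : Type*} (x y : TA α) : TA α :=
  x.sum fun u cu => y.sum fun v cv => (cu * cv) • lshw u v

/-- The antipode `𝒜`, with `𝒜(i₁⋯iₙ) = (−1)ⁿ iₙ⋯i₁`. -/
noncomputable def antipode {α : Type*} (x : TA α) : TA α :=
  x.sum fun w c => Finsupp.single w.reverse (((-1 : ℝ) ^ w.length) * c)

/-- Helper for `Λ_B`: value on a reversed word. -/
noncomputable def lamRev {α β : Type*} (B : α → TA β) : Word α → TA β
  | [] => Finsupp.single [] 1
  | [i] => B i
  | i :: w => rsh (lamRev B w) (B i)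

/-- `Λ_B` on a word: `Λ_B e = e`, `Λ_B i = B i`, `Λ_B (w·i) = (Λ_B w) ≻ (Λ_B i)`. -/
noncomputable def lamW {α β : Type*} (B : α → TA β) (w : Word α) : TA β :=
  lamRev B w.reverse

/-- The linear map `Λ_B : T(ℝ^t) → T(ℝ^d)` induced by `B` on letters. -/
noncomputable def Lam {α β : Type*} (B : α → TA β) (x : TA α) : TA β :=
  x.sum fun w c => c • lamW B w

/-- `splitEmb e j n w = Σ_{w = u₁⋯uₙ} e_j(u₁) ⧢ e_{j+1}(u₂) ⧢ ⋯ ⧢ e_{j+n−1}(uₙ)`,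
the sum over all splittings of `w` into `n` consecutive (possibly empty) factors,
each factor relabelled letterwise by `e`. -/
noncomputable def splitEmb {α β : Type*} (e : ℕ → α → β) : ℕ → ℕ → Word α → TA β
  | _, 0, w => if w.isEmpty then Finsupp.single ([] : Word β) (1 : ℝ) else 0
  | j, k + 1, w => ∑ m ∈ Finset.range (w.length + 1),
      sh (Finsupp.single ((w.take m).map (e j)) (1 : ℝ)) (splitEmb e (j + 1) k (w.drop m))

/-- `Σ_{x=uv} f(u)·v`: deconcatenate, evaluate the functional `f` on prefixes. -/
noncomputable def leftAct {α : Type*} (f : Word α → ℝ) (x : TA α) : TA α :=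
  x.sum fun w c => c • ∑ k ∈ Finset.range (w.length + 1),
    f (w.take k) • Finsupp.single (w.drop k) (1 : ℝ)

/-- `Σ_{x=uv} u·f(v)`: deconcatenate, evaluate the functional `f` on suffixes. -/
noncomputable def rightAct {α : Type*} (f : Word α → ℝ) (x : TA α) : TA α :=
  x.sum fun w c => c • ∑ k ∈ Finset.range (w.length + 1),
    f (w.drop k) • Finsupp.single (w.take k) (1 : ℝ)

/-- A raw path: a time horizon `T` together with a map `ℝ → ℝ^α`
(only the restriction to `[0,T]` is relevant). -/
structure RawPath (α : Type*) where
  T : ℝ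
  toFun : ℝ → α → ℝ

/-- A path: positive time horizon, continuous on `[0,T]` and piecewise continuously
differentiable there (witnessed by a partition `0 = τ₀ < τ₁ < ⋯ < τₙ = T`). -/
def IsPath {α : Type*} (X : RawPath α) : Prop :=
  0 < X.T ∧ (∀ i, ContinuousOn (fun t => X.toFun t i) (Set.Icc 0 X.T)) ∧
    ∃ (n : ℕ) (τ : Fin (n + 1) → ℝ), StrictMono τ ∧ τ 0 = 0 ∧ τ (Fin.last n) = X.T ∧
      ∀ (k : Fin n) (i : α), ContDiffOn ℝ 1 (fun t => X.toFun t i)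
        (Set.Icc (τ k.castSucc) (τ k.succ))

/-- Iterated integrals, by recursion on the reversed word:
`sigRev X (i :: w) t = ∫₀ᵗ ⟨σ(X)ₛ, w.reverse⟩ dX⁽ⁱ⁾(s)`. -/
noncomputable def sigRev {α : Type*} (X : ℝ → α → ℝ) : Word α → ℝ → ℝ
  | [], _ => 1
  | i :: w, t => ∫ s in (0 : ℝ)..t, sigRev X w s * deriv (fun u => X u i) s

/-- `⟨σ(X)_t, w⟩`, the iterated-integrals signature of `X` stopped at time `t`. -/
noncomputable def sigUpTo {α : Type*} (X : RawPath α) (t : ℝ) (w : Word α) : ℝ :=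
  sigRev X.toFun w.reverse t

/-- `⟨σ(X), w⟩`, the iterated-integrals signature of the path `X` at a word `w`. -/
noncomputable def sig {α : Type*} (X : RawPath α) (w : Word α) : ℝ :=
  sigUpTo X X.T w

/-- Pairing of a word-indexed functional with an element of `T(ℝ^d)`. -/
noncomputable def pairF {α : Type*} (f : Word α → ℝ) (x : TA α) : ℝ :=
  x.sum fun w c => c * f w

/-- `⟨σ(X), x⟩` for a tensor `x ∈ T(ℝ^d)` (linear in `x`). -/
noncomputable def pair {α : Type*} (X : RawPath α) (x : TA α) : ℝ :=
  Finsupp.linearCombination ℝ (sig X) x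

/-- The path variety `𝒱(W)` of all paths whose signature kills every element of `W`. -/
def V {α : Type*} (W : Set (TA α)) : Set (RawPath α) :=
  {X | IsPath X ∧ ∀ x ∈ W, pair X x = 0}

/-- `ℐ(M)`, the space of tensors killed by the signature of every path in `M`. -/
noncomputable def Idl {α : Type*} (M : Set (RawPath α)) : Submodule ℝ (TA α) :=
  ⨅ X ∈ M, LinearMap.ker (Finsupp.linearCombination ℝ (sig X))

/-- Concatenation `X ⊔ Y` of paths. -/
noncomputable def concat {α : Type*} (X Y : RawPath α) : RawPath α where
  T := X.T + Y.T
  toFun := fun t i =>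
    if t ≤ X.T then X.toFun t i else Y.toFun (t - X.T) i + X.toFun X.T i - Y.toFun 0 i

/-- Time reversal `⟵X`. -/
def timeRev {α : Type*} (X : RawPath α) : RawPath α :=
  ⟨X.T, fun t i => X.toFun (X.T - t) i⟩

/-- `concatIter X n = X^{⊔(n+1)}`. -/
noncomputable def concatIter {α : Type*} (X : RawPath α) : ℕ → RawPath α
  | 0 => X
  | n + 1 => concat (concatIter X n) X

/-- `X^{⊔n}`, the `n`-fold concatenation of `X` with itself (intended for `n ≥ 1`). -/
noncomputable def concatPow {α : Type*} (X : RawPath α) (n : ℕ) : RawPath α :=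
  concatIter X (n - 1)

/-- `concatFold f k = f 0 ⊔ f 1 ⊔ ⋯ ⊔ f k`. -/
noncomputable def concatFold {α : Type*} (f : ℕ → RawPath α) : ℕ → RawPath α
  | 0 => f 0
  | k + 1 => concat (concatFold f k) (f (k + 1))

/-- The deconcatenation coproduct `Δ : T(ℝ^d) → T(ℝ^d) ⊗ T(ℝ^d)`,
`Δw = Σ_{w=uv} u ⊗ v`. -/
noncomputable def deconc {α : Type*} (x : TA α) : TensorProduct ℝ (TA α) (TA α) :=
  x.sum fun w c => c • ∑ k ∈ Finset.range (w.length + 1),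
    (Finsupp.single (w.take k) (1 : ℝ)) ⊗ₜ[ℝ] (Finsupp.single (w.drop k) (1 : ℝ))


theorem perm_shuffles {α : Type*} : ∀ (u v : Word α), ∀ w ∈ shuffles u v, w.Perm (u ++ v) := by
  intro u v
  induction u, v using shuffles.induct with
  | case1 v => intro w hw; simp [shuffles] at hw; simp [hw]
  | case2 a u => intro w hw; simp [shuffles] at hw; simp [hw]
  | case3 a u b v ih1 ih2 =>
    intro w hw
    rw [shuffles] at hw
    rcases List.mem_append.1 hw with h | h <;> rcases List.mem_map.1 h with ⟨s, hs, rfl⟩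
    · exact (ih1 s hs).cons a
    · exact ((ih2 s hs).cons b).trans List.perm_middle.symm

/-- `rshw` on a word with a single-letter right factor appends the letter. -/
theorem rshw_concat {α : Type*} (u : Word α) (a : α) :
    rshw u [a] = Finsupp.single (u ++ [a]) 1 := by
  have h : shuffles u ([] : Word α) = [u] := by cases u <;> rw [shuffles]
  simp [rshw, h]

theorem rsh_single_single {α : Type*} (u v : Word α) :
    rsh (Finsupp.single u (1 : ℝ)) (Finsupp.single v (1 : ℝ)) = rshw u v := by
  rw [rsh, Finsupp.sum_single_index, Finsupp.sum_single_index] <;> simp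

/-- `rshw u v` lies in the span of words containing `z` whenever `v` is nonempty
and `z` occurs in `u` or in `v`. -/
theorem rshw_mem_supported {α : Type*} {z : α} {u v : Word α} (hv : v ≠ [])
    (hz : z ∈ u ∨ z ∈ v) :
    rshw u v ∈ Finsupp.supported ℝ ℝ {w : Word α | z ∈ w} := by
  obtain rfl | ⟨q, b, rfl⟩ := v.eq_nil_or_concat'
  · exact absurd rfl hv
  have h1 : (q ++ [b] : Word α).dropLast = q := List.dropLast_concat
  have h2 : (q ++ [b] : Word α).drop ((q ++ [b]).length - 1) = [b] := by
    simp [List.drop_left]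
  rw [rshw, h1, h2]
  apply list_sum_mem
  intro x hx
  rcases List.mem_map.1 hx with ⟨s, hs, rfl⟩
  apply Finsupp.single_mem_supported
  have hperm := perm_shuffles u q s hs
  show z ∈ s ++ [b]
  rcases hz with h | h
  · exact List.mem_append.2 (Or.inl (hperm.mem_iff.2 (List.mem_append.2 (Or.inl h))))
  · rcases List.mem_append.1 h with h | h
    · exact List.mem_append.2 (Or.inl (hperm.mem_iff.2 (List.mem_append.2 (Or.inr h))))
    · exact List.mem_append.2 (Or.inr h)

/-- In `T(ℝ^d)`, `d ≥ 1`, the smallest subspace of `T^{≥1}(ℝ^d)`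
containing the letter `1` and stable under left and right `≻`-multiplication by
`T^{≥1}(ℝ^d)` equals the linear span of all words containing the letter `1`. -/
theorem statement5 {d : ℕ} (hd : 0 < d) :
    sInf {J : Submodule ℝ (TA (Fin d)) |
        (∀ x ∈ J, x [] = 0) ∧
        Finsupp.single [(⟨0, hd⟩ : Fin d)] 1 ∈ J ∧
        ∀ x ∈ J, ∀ y : TA (Fin d), y [] = 0 → rsh x y ∈ J ∧ rsh y x ∈ J} =
      Submodule.span ℝ {x : TA (Fin d) |
        ∃ w : Word (Fin d), (⟨0, hd⟩ : Fin d) ∈ w ∧ x = Finsupp.single w 1} := by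
  set z : Fin d := ⟨0, hd⟩ with hz
  have hset : {x : TA (Fin d) | ∃ w : Word (Fin d), z ∈ w ∧ x = Finsupp.single w 1}
      = (fun w => Finsupp.single w (1 : ℝ)) '' {w : Word (Fin d) | z ∈ w} := by
    ext x
    constructor
    · rintro ⟨w, hw, rfl⟩; exact ⟨w, hw, rfl⟩
    · rintro ⟨w, hw, rfl⟩; exact ⟨w, hw, rfl⟩
  rw [hset, ← Finsupp.supported_eq_span_single]
  apply le_antisymm
  · apply sInf_le
    refine ⟨?_, ?_, ?_⟩
    · intro x hx
      exact (Finsupp.mem_supported' ℝ x).1 hx [] (by simp)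
    · exact Finsupp.single_mem_supported ℝ 1 (by simp)
    · intro x hx y hy
      have hxs : ∀ u ∈ x.support, z ∈ u := fun u hu =>
        (Finsupp.mem_supported ℝ x).1 hx hu
      constructor
      · rw [rsh]
        refine Submodule.sum_mem _ fun u hu => Submodule.sum_mem _ fun v hv =>
          Submodule.smul_mem _ _ ?_
        refine rshw_mem_supported ?_ (Or.inl (hxs u hu))
        intro h
        exact (Finsupp.mem_support_iff.1 hv) (h ▸ hy)
      · rw [rsh]
        refine Submodule.sum_mem _ fun u hu => Submodule.sum_mem _ fun v hv =>
          Submodule.smul_mem _ _ ?_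
        exact rshw_mem_supported (List.ne_nil_of_mem (hxs v hv)) (Or.inr (hxs v hv))
  · apply le_sInf
    rintro J ⟨hJ0, hJz, hJcl⟩
    have hmem : ∀ (s p : Word (Fin d)), Finsupp.single (p ++ z :: s) (1 : ℝ) ∈ J := by
      intro s
      induction s using List.reverseRecOn with
      | nil =>
        intro p
        rcases eq_or_ne p [] with rfl | hp
        · simpa using hJz
        · have hy : (Finsupp.single p (1 : ℝ)) [] = 0 :=
            Finsupp.single_eq_of_ne' hp
          have h := (hJcl _ hJz _ hy).2
          rwa [rsh_single_single, rshw_concat] at h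
      | append_singleton s a ih =>
        intro p
        have hy : (Finsupp.single [a] (1 : ℝ)) [] = 0 :=
          Finsupp.single_eq_of_ne' (by simp)
        have h := (hJcl _ (ih p) _ hy).1
        rw [rsh_single_single, rshw_concat] at h
        simpa using h
    rw [Finsupp.supported_eq_span_single, Submodule.span_le]
    rintro x ⟨w, hw, rfl⟩
    obtain ⟨p, s, rfl⟩ := List.append_of_mem hw
    exact hmem s p

end PathVarieties
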